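/- The monodromy of the width-1 family: for the 6-periodic coefficients given in terms of parameters (a,b) with a ≠ 0, b ≠ 0 by a₃ = a₆ = a, b₃ = b₆ = b, a₁ = a₄ = (1+b+a²)/(ab), b₁ = b₄ = (1+a²)/b, a₂ = a₅ = (1+b)/a, b₂ = b₅ = ((1+b)²+a²)/(a²b), the product E₁E₂E₃E₄E₅E₆ of the companion matrices E_j = [[0,0,0,−1],[1,0,0,a_{j−1}],[0,1,0,−b_j],[0,0,1,a_j]] equals −Id₄. -/
import Mathlib
set_option maxHeartbeats 1600000


open Matrix

/-- Monodromy of the width-1 family: with the 6-periodic coefficients expressed in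
terms of parameters `(a,b)` with `a ≠ 0`, `b ≠ 0`, the product `E₁E₂E₃E₄E₅E₆` of the
companion matrices equals `−Id`. -/
theorem width_one_monodromy {K : Type*} [Field K] (a b : K) (ha : a ≠ 0) (hb : b ≠ 0) :
    let a1 := (1 + b + a ^ 2) / (a * b)
    let a2 := (1 + b) / a
    let b1 := (1 + a ^ 2) / b
    let b2 := ((1 + b) ^ 2 + a ^ 2) / (a ^ 2 * b)
    -- `E p q r` is the companion matrix `E_j` with `p = a_{j-1}`, `q = b_j`, `r = a_j`
    let E : K → K → K → Matrix (Fin 4) (Fin 4) K :=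
      fun p q r => !![0, 0, 0, -1; 1, 0, 0, p; 0, 1, 0, -q; 0, 0, 1, r]
    E a b1 a1 * E a1 b2 a2 * E a2 b a * E a b1 a1 * E a1 b2 a2 * E a2 b a = -1 := by
  intro a1 a2 b1 b2 E
  have ha2 : a ^ 2 ≠ 0 := pow_ne_zero 2 ha
  set M : Matrix (Fin 4) (Fin 4) K :=
    !![0, -1, -a2, -1; 0, a, b, 0; 0, -b1, -a, 0; 1, a1, 1, 0] with hM
  have key : E a b1 a1 * E a1 b2 a2 * E a2 b a = M := by
    show !![0, 0, 0, -1; 1, 0, 0, a; 0, 1, 0, -b1; 0, 0, 1, a1] *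
        !![0, 0, 0, -1; 1, 0, 0, a1; 0, 1, 0, -b2; 0, 0, 1, a2] *
        !![0, 0, 0, -1; 1, 0, 0, a2; 0, 1, 0, -b; 0, 0, 1, a] = M
    rw [hM]
    ext i j
    fin_cases i <;> fin_cases j <;>
      simp [Matrix.mul_apply, Fin.sum_univ_four, Matrix.vecHead, Matrix.vecTail, a1, a2, b1, b2] <;>
      field_simp <;> ring
  have key2 : M * M = -1 := by
    have hneg : (-1 : Matrix (Fin 4) (Fin 4) K) =
        !![-1,0,0,0;0,-1,0,0;0,0,-1,0;0,0,0,-1] := by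
      ext i j; fin_cases i <;> fin_cases j <;>
        simp [Matrix.one_apply, Matrix.vecHead, Matrix.vecTail]
    rw [hM, hneg]
    ext i j
    fin_cases i <;> fin_cases j <;>
      (try simp [Matrix.mul_apply, Fin.sum_univ_four, Matrix.vecHead, Matrix.vecTail,
        a1, a2, b1, b2]) <;> (try field_simp) <;> ring_nf
  calc E a b1 a1 * E a1 b2 a2 * E a2 b a * E a b1 a1 * E a1 b2 a2 * E a2 b a
      = (E a b1 a1 * E a1 b2 a2 * E a2 b a) * (E a b1 a1 * E a1 b2 a2 * E a2 b a) := by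
        simp only [Matrix.mul_assoc]
    _ = M * M := by rw [key]
    _ = -1 := key2
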